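/- Let A = R/I be a level standard graded artinian algebra of type 2 with socle degree e, where R = k[x_1,…,x_r]. Suppose J_1 and J_2 are homogeneous ideals of A with J_1 ∩ J_2 = 0 such that A/J_1 and A/J_2 are Gorenstein standard graded artinian algebras of socle degree e. For 0 ≤ d ≤ e set h''_d = dim_k (A/(J_1+J_2))_d, h'_d = dim_k (A/J_1)_d − h''_d and h'''_d = dim_k (A/J_2)_d − h''_d. Then (1) dim_k A_d = h'_d + h''_d + h'''_d for all 0 ≤ d ≤ e; and (2) each of the three sequences (h''_d)_{0≤d≤e}, (h'_{e−d})_{0≤d≤e} and (h'''_{e−d})_{0≤d≤e} is the Hilbert function (in degrees 0,…,e, and zero in degrees > e) of some graded quotient of A by a homogeneous ideal. -/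
import Mathlib


open MvPolynomial

/-- The degree-`d` graded piece of the quotient `k[x_1,…,x_r]/I`, realized as the image of
the space of homogeneous polynomials of degree `d` in the quotient. -/
noncomputable def quotPiece (k : Type) [Field k] (r : ℕ)
    (I : Ideal (MvPolynomial (Fin r) k)) (d : ℕ) :
    Submodule k (MvPolynomial (Fin r) k ⧸ I) :=
  (homogeneousSubmodule (Fin r) k d).map (Ideal.Quotient.mkₐ k I).toLinearMap

/-- The Hilbert function of the quotient `k[x_1,…,x_r]/I`. -/
noncomputable def hilb (k : Type) [Field k] (r : ℕ)
    (I : Ideal (MvPolynomial (Fin r) k)) (d : ℕ) : ℕ :=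
  Module.finrank k (quotPiece k r I d)

/-- `A = k[x_1,…,x_r]/I` is a level standard graded artinian algebra of socle degree `e` and
type `t`: the ideal `I` is homogeneous, the Hilbert function of `A` vanishes in degrees `> e`
and equals `t` in degree `e`, and the socle of `A` (the annihilator of the irrelevant maximal
ideal) coincides with the degree-`e` graded piece `A_e`. -/
def IsLevelQuot (k : Type) [Field k] (r e t : ℕ)
    (I : Ideal (MvPolynomial (Fin r) k)) : Prop :=
  (∀ f ∈ I, ∀ d, homogeneousComponent d f ∈ I) ∧
  (∀ d, e < d → hilb k r I d = 0) ∧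
  hilb k r I e = t ∧
  {a : MvPolynomial (Fin r) k ⧸ I | ∀ i, a * Ideal.Quotient.mk I (X i) = 0} =
    (quotPiece k r I e : Set (MvPolynomial (Fin r) k ⧸ I))

set_option maxHeartbeats 1000000
set_option synthInstance.maxHeartbeats 400000

section Helpers

variable {k : Type} [Field k] {r : ℕ}

local notation "R" => MvPolynomial (Fin r) k

instance homSubFD (d : ℕ) : Module.Finite k (homogeneousSubmodule (Fin r) k d) := by
  refine Submodule.finiteDimensional_of_le (S₂ := restrictTotalDegree (Fin r) k d) ?_
  intro p hp
  rw [mem_restrictTotalDegree]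
  exact ((mem_homogeneousSubmodule _ _).mp hp).totalDegree_le

lemma ker_mkQ (J : Ideal R) :
    LinearMap.ker (Ideal.Quotient.mkₐ k J).toLinearMap = J.restrictScalars k := by
  ext f
  simp [Ideal.Quotient.eq_zero_iff_mem]

lemma finrank_map_add (J : Ideal R) (S : Submodule k R) [Module.Finite k S] :
    Module.finrank k (S.map (Ideal.Quotient.mkₐ k J).toLinearMap)
      + Module.finrank k (S ⊓ J.restrictScalars k : Submodule k R)
      = Module.finrank k S := by
  set f := (Ideal.Quotient.mkₐ k J).toLinearMap.comp S.subtype with hf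
  have h1 : LinearMap.range f = S.map (Ideal.Quotient.mkₐ k J).toLinearMap := by
    rw [hf, LinearMap.range_comp, Submodule.range_subtype]
  have h2 : LinearMap.ker f = Submodule.comap S.subtype (S ⊓ J.restrictScalars k) := by
    rw [hf, LinearMap.ker_comp, ker_mkQ]
    ext x
    simp [x.2]
  have h3 := LinearMap.finrank_range_add_finrank_ker f
  rw [h1, h2] at h3
  have h4 : Module.finrank k (Submodule.comap S.subtype (S ⊓ J.restrictScalars k))
      = Module.finrank k (S ⊓ J.restrictScalars k : Submodule k R) :=
    (Submodule.comapSubtypeEquivOfLe inf_le_left).finrank_eq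
  rw [h4] at h3
  exact h3

lemma hilb_add (J : Ideal R) (d : ℕ) :
    hilb k r J d
      + Module.finrank k (homogeneousSubmodule (Fin r) k d ⊓ J.restrictScalars k : Submodule k R)
      = Module.finrank k (homogeneousSubmodule (Fin r) k d) :=
  finrank_map_add J _

lemma hilb_anti {I J : Ideal R} (h : I ≤ J) (d : ℕ) : hilb k r J d ≤ hilb k r I d := by
  have h1 := hilb_add I d
  have h2 := hilb_add J d
  have h3 : Module.finrank k (homogeneousSubmodule (Fin r) k d ⊓ I.restrictScalars k : Submodule k R)
      ≤ Module.finrank k (homogeneousSubmodule (Fin r) k d ⊓ J.restrictScalars k : Submodule k R) := by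
    apply Submodule.finrank_mono
    · exact inf_le_inf_left _ (fun x hx => h hx)
  omega

instance quotPieceFD (J : Ideal R) (d : ℕ) : Module.Finite k (quotPiece k r J d) :=
  Module.Finite.map _ _

lemma quotPiece_eq_bot {J : Ideal R} {d : ℕ} (h : hilb k r J d = 0) :
    quotPiece k r J d = ⊥ :=
  Submodule.finrank_eq_zero.mp h

end Helpers

section Pieces

variable {k : Type} [Field k] {r : ℕ}

local notation "R" => MvPolynomial (Fin r) k

lemma mem_quotPiece {J : Ideal R} {d : ℕ} {x : R ⧸ J} :
    x ∈ quotPiece k r J d ↔ ∃ f, f.IsHomogeneous d ∧ Ideal.Quotient.mk J f = x := by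
  constructor
  · rintro ⟨f, hf, rfl⟩
    exact ⟨f, hf, rfl⟩
  · rintro ⟨f, hf, rfl⟩
    exact ⟨f, hf, rfl⟩

lemma quotPiece_mul {J : Ideal R} {i j : ℕ} {x y : R ⧸ J}
    (hx : x ∈ quotPiece k r J i) (hy : y ∈ quotPiece k r J j) :
    x * y ∈ quotPiece k r J (i + j) := by
  rw [mem_quotPiece] at hx hy ⊢
  obtain ⟨f, hf, rfl⟩ := hx
  obtain ⟨g, hg, rfl⟩ := hy
  exact ⟨f * g, hf.mul hg, map_mul _ _ _⟩

lemma one_mem_quotPiece {J : Ideal R} : (1 : R ⧸ J) ∈ quotPiece k r J 0 :=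
  mem_quotPiece.mpr ⟨1, isHomogeneous_one _ _, map_one _⟩

lemma quotPiece_disjoint {J : Ideal R} (hhom : ∀ f ∈ J, ∀ d, homogeneousComponent d f ∈ J)
    {i j : ℕ} (hij : i ≠ j) {x : R ⧸ J} (hx : x ∈ quotPiece k r J i)
    (hy : x ∈ quotPiece k r J j) : x = 0 := by
  rw [mem_quotPiece] at hx hy
  obtain ⟨f, hf, rfl⟩ := hx
  obtain ⟨g, hg, hgf⟩ := hy
  have hmem : g - f ∈ J := Ideal.Quotient.eq.mp hgf
  have h2 := hhom _ hmem i
  rw [map_sub, homogeneousComponent_of_mem ((mem_homogeneousSubmodule _ _).mpr hg),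
    homogeneousComponent_of_mem ((mem_homogeneousSubmodule _ _).mpr hf),
    if_neg (fun h => hij h), if_pos rfl, zero_sub] at h2
  rw [Ideal.Quotient.eq_zero_iff_mem]
  simpa using J.neg_mem h2

lemma nondeg {e : ℕ} {J : Ideal R}
    (hhom : ∀ f ∈ J, ∀ d, homogeneousComponent d f ∈ J)
    (hsoc : {a : R ⧸ J | ∀ i, a * Ideal.Quotient.mk J (MvPolynomial.X i) = 0} =
      (quotPiece k r J e : Set (R ⧸ J))) :
    ∀ n d, d + n = e → ∀ x ∈ quotPiece k r J d, x ≠ 0 →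
      ∃ y ∈ quotPiece k r J n, x * y ≠ 0 := by
  intro n
  induction n with
  | zero =>
    intro d hd x _ hx0
    exact ⟨1, one_mem_quotPiece, by simpa using hx0⟩
  | succ n ih =>
    intro d hd x hx hx0
    have hde : d ≠ e := by omega
    have : ¬ (∀ i, x * Ideal.Quotient.mk J (MvPolynomial.X i) = 0) := by
      intro hall
      have : x ∈ quotPiece k r J e := by
        have hx' : x ∈ {a : R ⧸ J | ∀ i, a * Ideal.Quotient.mk J (MvPolynomial.X i) = 0} := hall
        rw [hsoc] at hx'
        exact hx'
      exact hx0 (quotPiece_disjoint hhom hde hx this)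
    push_neg at this
    obtain ⟨i, hi⟩ := this
    have hXi : Ideal.Quotient.mk J (MvPolynomial.X i) ∈ quotPiece k r J 1 :=
      mem_quotPiece.mpr ⟨MvPolynomial.X i, isHomogeneous_X _ _, rfl⟩
    have hx1 : x * Ideal.Quotient.mk J (MvPolynomial.X i) ∈ quotPiece k r J (d + 1) :=
      quotPiece_mul hx hXi
    obtain ⟨y, hy, hy0⟩ := ih (d + 1) (by omega) _ hx1 hi
    refine ⟨Ideal.Quotient.mk J (MvPolynomial.X i) * y, ?_, ?_⟩
    · have := quotPiece_mul hXi hy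
      rwa [show 1 + n = n + 1 by omega] at this
    · intro h
      apply hy0
      rw [← mul_assoc] at h
      exact h

end Pieces

section HomogIdeals

variable {k : Type} [Field k] {r : ℕ}

local notation "R" => MvPolynomial (Fin r) k

/-- the degree-d graded pieces of a sum of homogeneous ideals -/
lemma inf_sup_piece {I1 I2 : Ideal R}
    (h1 : ∀ f ∈ I1, ∀ d, homogeneousComponent d f ∈ I1)
    (h2 : ∀ f ∈ I2, ∀ d, homogeneousComponent d f ∈ I2) (d : ℕ) :
    homogeneousSubmodule (Fin r) k d ⊓ (I1 + I2).restrictScalars k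
      = (homogeneousSubmodule (Fin r) k d ⊓ I1.restrictScalars k)
        ⊔ (homogeneousSubmodule (Fin r) k d ⊓ I2.restrictScalars k) := by
  apply le_antisymm
  · rintro f ⟨hfd, hfI⟩
    obtain ⟨g, hg, h, hh, hgh⟩ := Submodule.mem_sup.mp hfI
    have hfd' : f.IsHomogeneous d := hfd
    have : f = homogeneousComponent d g + homogeneousComponent d h := by
      rw [← map_add, hgh, homogeneousComponent_of_mem ((mem_homogeneousSubmodule _ _).mpr hfd'),
        if_pos rfl]
    rw [this]
    exact Submodule.mem_sup.mpr ⟨homogeneousComponent d g,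
      ⟨homogeneousComponent_mem _ _, h1 _ hg d⟩,
      homogeneousComponent d h, ⟨homogeneousComponent_mem _ _, h2 _ hh d⟩, rfl⟩
  · apply sup_le
    · exact inf_le_inf_left _ (fun x hx => Submodule.mem_sup_left hx)
    · exact inf_le_inf_left _ (fun x hx => Submodule.mem_sup_right hx)

lemma sum_homog {I1 I2 : Ideal R}
    (h1 : ∀ f ∈ I1, ∀ d, homogeneousComponent d f ∈ I1)
    (h2 : ∀ f ∈ I2, ∀ d, homogeneousComponent d f ∈ I2) :
    ∀ f ∈ I1 + I2, ∀ d, homogeneousComponent d f ∈ I1 + I2 := by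
  intro f hf d
  obtain ⟨g, hg, h, hh, rfl⟩ := Submodule.mem_sup.mp hf
  rw [map_add]
  exact Submodule.add_mem _ (Submodule.mem_sup_left (h1 _ hg d))
    (Submodule.mem_sup_right (h2 _ hh d))

/-- the colon ideal I1 : I2 -/
def colonI (I1 I2 : Ideal R) : Ideal R where
  carrier := {f | ∀ g ∈ I2, f * g ∈ I1}
  add_mem' := by
    intro a b ha hb g hg
    rw [add_mul]
    exact I1.add_mem (ha g hg) (hb g hg)
  zero_mem' := by
    intro g hg
    rw [zero_mul]
    exact I1.zero_mem
  smul_mem' := by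
    intro c f hf g hg
    rw [smul_eq_mul, mul_assoc]
    exact I1.mul_mem_left c (hf g hg)

lemma le_colonI_left (I1 I2 : Ideal R) : I1 ≤ colonI I1 I2 :=
  fun f hf g _ => I1.mul_mem_right g hf

lemma mem_colonI {I1 I2 : Ideal R} {f : R} : f ∈ colonI I1 I2 ↔ ∀ g ∈ I2, f * g ∈ I1 :=
  Iff.rfl

lemma homogCOmp_mul_homog {f g : R} {j : ℕ} (hg : g.IsHomogeneous j) (d : ℕ) :
    homogeneousComponent (d + j) (f * g) = homogeneousComponent d f * g := by
  conv_lhs => rw [← sum_homogeneousComponent f, Finset.sum_mul, map_sum]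
  have key : ∀ i, homogeneousComponent (d + j) (homogeneousComponent i f * g)
      = if i = d then homogeneousComponent d f * g else 0 := by
    intro i
    have hmem : homogeneousComponent i f * g ∈ homogeneousSubmodule (Fin r) k (i + j) :=
      Submodule.mul_mem_mul (homogeneousComponent_mem i f)
        ((mem_homogeneousSubmodule _ _).mpr hg) |> (homogeneousSubmodule_mul i j)
    rw [homogeneousComponent_of_mem hmem]
    by_cases hi : i = d
    · subst hi; rw [if_pos rfl, if_pos rfl]
    · rw [if_neg (by omega), if_neg hi]
  simp_rw [key]
  rw [Finset.sum_ite_eq' (Finset.range (f.totalDegree + 1)) d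
    (fun _ => homogeneousComponent d f * g)]
  by_cases hd : d ∈ Finset.range (f.totalDegree + 1)
  · rw [if_pos hd]
  · rw [if_neg hd, homogeneousComponent_eq_zero, zero_mul]
    simp only [Finset.mem_range] at hd
    omega

lemma colonI_homog {I1 I2 : Ideal R}
    (h1 : ∀ f ∈ I1, ∀ d, homogeneousComponent d f ∈ I1)
    (h2 : ∀ f ∈ I2, ∀ d, homogeneousComponent d f ∈ I2) :
    ∀ f ∈ colonI I1 I2, ∀ d, homogeneousComponent d f ∈ colonI I1 I2 := by
  intro f hf d g hg
  -- decompose g into homogeneous components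
  have hdec : homogeneousComponent d f * g
      = ∑ j ∈ Finset.range (g.totalDegree + 1), homogeneousComponent d f * homogeneousComponent j g := by
    rw [← Finset.mul_sum, sum_homogeneousComponent]
  rw [hdec]
  apply I1.sum_mem
  intro j _
  have hgj : (homogeneousComponent j g).IsHomogeneous j := homogeneousComponent_isHomogeneous j g
  have hfg : f * homogeneousComponent j g ∈ I1 := hf _ (h2 _ hg j)
  have := h1 _ hfg (d + j)
  rwa [homogCOmp_mul_homog hgj d] at this

end HomogIdeals

section Duality

variable {k : Type} [Field k] {r : ℕ}

local notation "R" => MvPolynomial (Fin r) k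

/-- the image of the degree-`j` piece of `I2` in `R/I1` -/
noncomputable def bpiece (I1 I2 : Ideal R) (j : ℕ) : Submodule k (R ⧸ I1) :=
  ((homogeneousSubmodule (Fin r) k j) ⊓ I2.restrictScalars k).map
    (Ideal.Quotient.mkₐ k I1).toLinearMap

lemma bpiece_le (I1 I2 : Ideal R) (j : ℕ) : bpiece I1 I2 j ≤ quotPiece k r I1 j :=
  Submodule.map_mono inf_le_left

lemma mem_bpiece {I1 I2 : Ideal R} {j : ℕ} {x : R ⧸ I1} :
    x ∈ bpiece I1 I2 j ↔ ∃ f, f.IsHomogeneous j ∧ f ∈ I2 ∧ Ideal.Quotient.mk I1 f = x := by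
  constructor
  · rintro ⟨f, ⟨hf1, hf2⟩, rfl⟩
    exact ⟨f, hf1, hf2, rfl⟩
  · rintro ⟨f, hf1, hf2, rfl⟩
    exact ⟨f, ⟨hf1, hf2⟩, rfl⟩

instance bpieceFD (I1 I2 : Ideal R) (j : ℕ) : Module.Finite k (bpiece I1 I2 j) := by
  haveI : Module.Finite k
      (homogeneousSubmodule (Fin r) k j ⊓ I2.restrictScalars k : Submodule k R) :=
    Submodule.finiteDimensional_of_le inf_le_left
  exact Module.Finite.map _ _

/-- the annihilator of (the image of) `I2` in `R/I1`, as a `k`-submodule -/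
def annS (I1 I2 : Ideal R) : Submodule k (R ⧸ I1) where
  carrier := {x | ∀ g ∈ I2, x * Ideal.Quotient.mk I1 g = 0}
  add_mem' := by
    intro a b ha hb g hg
    rw [add_mul, ha g hg, hb g hg, add_zero]
  zero_mem' := by
    intro g hg
    rw [zero_mul]
  smul_mem' := by
    intro c x hx g hg
    rw [smul_mul_assoc, hx g hg, smul_zero]

lemma bfinrank (I1 I2 : Ideal R) (j : ℕ) :
    Module.finrank k (bpiece I1 I2 j)
      + Module.finrank k (homogeneousSubmodule (Fin r) k j
          ⊓ (I1 ⊓ I2).restrictScalars k : Submodule k R)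
      = Module.finrank k (homogeneousSubmodule (Fin r) k j
          ⊓ I2.restrictScalars k : Submodule k R) := by
  haveI : Module.Finite k
      (homogeneousSubmodule (Fin r) k j ⊓ I2.restrictScalars k : Submodule k R) :=
    Submodule.finiteDimensional_of_le inf_le_left
  have h := finrank_map_add I1 (homogeneousSubmodule (Fin r) k j ⊓ I2.restrictScalars k)
  have he : (homogeneousSubmodule (Fin r) k j ⊓ I2.restrictScalars k) ⊓ I1.restrictScalars k
      = homogeneousSubmodule (Fin r) k j ⊓ (I1 ⊓ I2).restrictScalars k := by
    ext f
    constructor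
    · rintro ⟨⟨h1, h2⟩, h3⟩
      exact ⟨h1, h3, h2⟩
    · rintro ⟨h1, h2, h3⟩
      exact ⟨⟨h1, h3⟩, h2⟩
  rw [he] at h
  exact h

lemma duality (I1 I2 : Ideal R) (e : ℕ)
    (h1hom : ∀ f ∈ I1, ∀ d, homogeneousComponent d f ∈ I1)
    (hvan1 : ∀ d, e < d → hilb k r I1 d = 0)
    (hone : hilb k r I1 e = 1)
    (hsoc : {a : R ⧸ I1 | ∀ i, a * Ideal.Quotient.mk I1 (MvPolynomial.X i) = 0} =
      (quotPiece k r I1 e : Set (R ⧸ I1)))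
    (h2hom : ∀ f ∈ I2, ∀ d, homogeneousComponent d f ∈ I2)
    (d : ℕ) (hd : d ≤ e) :
    hilb k r (colonI I1 I2) d = Module.finrank k (bpiece I1 I2 (e - d)) := by
  -- Step 1 : hilb (colon) d + finrank (G d ⊓ annS) = hilb I1 d
  have step1 : hilb k r (colonI I1 I2) d
      + Module.finrank k (quotPiece k r I1 d ⊓ annS I1 I2 : Submodule k (R ⧸ I1))
      = hilb k r I1 d := by
    set S : Submodule k R :=
      homogeneousSubmodule (Fin r) k d ⊓ (colonI I1 I2).restrictScalars k with hS
    haveI : Module.Finite k S := Submodule.finiteDimensional_of_le inf_le_left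
    have claim1 : S ⊓ I1.restrictScalars k
        = homogeneousSubmodule (Fin r) k d ⊓ I1.restrictScalars k := by
      ext f
      constructor
      · rintro ⟨⟨h1, _⟩, h3⟩
        exact ⟨h1, h3⟩
      · rintro ⟨h1, h2⟩
        exact ⟨⟨h1, le_colonI_left I1 I2 h2⟩, h2⟩
    have claim2 : S.map (Ideal.Quotient.mkₐ k I1).toLinearMap
        = quotPiece k r I1 d ⊓ annS I1 I2 := by
      apply le_antisymm
      · rintro x ⟨f, ⟨hf1, hf2⟩, rfl⟩
        refine ⟨⟨f, hf1, rfl⟩, ?_⟩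
        intro g hg
        have : f * g ∈ I1 := hf2 g hg
        show Ideal.Quotient.mk I1 f * Ideal.Quotient.mk I1 g = 0
        rw [← map_mul, Ideal.Quotient.eq_zero_iff_mem]
        exact this
      · rintro x ⟨hx1, hx2⟩
        obtain ⟨f, hf, rfl⟩ := mem_quotPiece.mp hx1
        refine ⟨f, ⟨hf, ?_⟩, rfl⟩
        intro g hg
        have := hx2 g hg
        rw [← map_mul, Ideal.Quotient.eq_zero_iff_mem] at this
        exact this
    have h1 := finrank_map_add I1 S
    rw [claim1, claim2] at h1
    have h2 := hilb_add (colonI I1 I2) d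
    have h3 := hilb_add I1 d
    rw [← hS] at h2
    omega
  -- Step 2 : hilb I1 d = finrank (G d ⊓ annS) + finrank (bpiece (e-d))
  have step2 : hilb k r I1 d
      = Module.finrank k (quotPiece k r I1 d ⊓ annS I1 I2 : Submodule k (R ⧸ I1))
        + Module.finrank k (bpiece I1 I2 (e - d)) := by
    -- the multiplication pairing into the 1-dimensional socle
    have hmul : ∀ (x : quotPiece k r I1 d) (z : bpiece I1 I2 (e - d)),
        (x : R ⧸ I1) * (z : R ⧸ I1) ∈ quotPiece k r I1 e := by
      intro x z
      have := quotPiece_mul x.2 (bpiece_le I1 I2 (e - d) z.2)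
      rwa [show d + (e - d) = e by omega] at this
    set μ : quotPiece k r I1 d →ₗ[k] bpiece I1 I2 (e - d) →ₗ[k] quotPiece k r I1 e :=
      LinearMap.mk₂ k (fun x z => ⟨(x : R ⧸ I1) * (z : R ⧸ I1), hmul x z⟩)
        (fun x x' z => by ext; simp [add_mul])
        (fun c x z => by ext; simp [smul_mul_assoc])
        (fun x z z' => by ext; simp [mul_add])
        (fun c x z => by ext; simp [mul_smul_comm]) with hμ
    have hfr : Module.finrank k (quotPiece k r I1 e) = Module.finrank k k := by
      rw [Module.finrank_self]
      exact hone
    set φ : quotPiece k r I1 e ≃ₗ[k] k := LinearEquiv.ofFinrankEq _ _ hfr with hφ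
    set β := μ.compr₂ φ.toLinearMap with hβ
    have hβapp : ∀ x z, β x z = φ ⟨(x : R ⧸ I1) * (z : R ⧸ I1), hmul x z⟩ := fun x z => rfl
    have hβ0 : ∀ x z, β x z = 0 ↔ (x : R ⧸ I1) * (z : R ⧸ I1) = 0 := by
      intro x z
      rw [hβapp]
      rw [map_eq_zero_iff _ φ.injective]
      exact Submodule.mk_eq_zero _ _
    -- left kernel
    have k1 : LinearMap.ker β
        = Submodule.comap (quotPiece k r I1 d).subtype
            (quotPiece k r I1 d ⊓ annS I1 I2) := by
      ext x
      simp only [LinearMap.mem_ker, Submodule.mem_comap, Submodule.mem_inf]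
      constructor
      · intro h
        refine ⟨x.2, ?_⟩
        -- x annihilates every element of I2
        have hx : ∀ z : bpiece I1 I2 (e - d), (x : R ⧸ I1) * (z : R ⧸ I1) = 0 := by
          intro z
          rw [← hβ0 x z, h]
          rfl
        -- first, homogeneous elements of I2
        have key : ∀ j g', g' ∈ I2 → g'.IsHomogeneous j →
            (x : R ⧸ I1) * Ideal.Quotient.mk I1 g' = 0 := by
          intro j g' hg2 hgj
          have hxg : (x : R ⧸ I1) * Ideal.Quotient.mk I1 g' ∈ quotPiece k r I1 (d + j) :=
            quotPiece_mul x.2 (mem_quotPiece.mpr ⟨g', hgj, rfl⟩)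
          by_cases hej : e < d + j
          · rw [quotPiece_eq_bot (hvan1 _ hej)] at hxg
            simpa using hxg
          · by_contra hne
            obtain ⟨y, hy, hy0⟩ := nondeg h1hom hsoc (e - (d + j)) (d + j) (by omega) _ hxg hne
            obtain ⟨y', hy', rfl⟩ := mem_quotPiece.mp hy
            have hgy : g' * y' ∈ I2 := I2.mul_mem_right _ hg2
            have hhomgy : (g' * y').IsHomogeneous (e - d) := by
              have := hgj.mul hy'
              rwa [show j + (e - (d + j)) = e - d by omega] at this
            have hz : Ideal.Quotient.mk I1 (g' * y') ∈ bpiece I1 I2 (e - d) :=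
              mem_bpiece.mpr ⟨g' * y', hhomgy, hgy, rfl⟩
            have h0 := hx ⟨_, hz⟩
            apply hy0
            calc (x : R ⧸ I1) * Ideal.Quotient.mk I1 g' * Ideal.Quotient.mk I1 y'
                = (x : R ⧸ I1) * Ideal.Quotient.mk I1 (g' * y') := by
                  rw [map_mul, mul_assoc]
              _ = 0 := h0
        intro g hg
        show (x : R ⧸ I1) * Ideal.Quotient.mk I1 g = 0
        have hdec : (x : R ⧸ I1) * Ideal.Quotient.mk I1 g
            = ∑ j ∈ Finset.range (g.totalDegree + 1),
                (x : R ⧸ I1) * Ideal.Quotient.mk I1 (homogeneousComponent j g) := by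
          rw [← Finset.mul_sum, ← map_sum, sum_homogeneousComponent]
        rw [hdec]
        apply Finset.sum_eq_zero
        intro j _
        exact key j _ (h2hom _ hg j) (homogeneousComponent_isHomogeneous j g)
      · rintro ⟨_, hann⟩
        apply LinearMap.ext
        intro z
        rw [LinearMap.zero_apply, hβ0 x z]
        obtain ⟨g', _, hg2, hzeq⟩ := mem_bpiece.mp z.2
        rw [← hzeq]
        exact hann g' hg2
    -- right kernel is trivial
    have k2 : LinearMap.ker β.flip = ⊥ := by
      rw [Submodule.eq_bot_iff]
      intro z hz
      by_contra hz0
      have hz1 : (z : R ⧸ I1) ≠ 0 := fun h => hz0 (Subtype.ext h)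
      obtain ⟨y, hy, hy0⟩ := nondeg h1hom hsoc d (e - d) (by omega) _
        (bpiece_le I1 I2 (e - d) z.2) hz1
      apply hy0
      have := LinearMap.congr_fun (LinearMap.mem_ker.mp hz) ⟨y, hy⟩
      rw [LinearMap.zero_apply] at this
      have h0 : β ⟨y, hy⟩ z = 0 := this
      rw [hβ0] at h0
      rw [mul_comm]
      exact h0
    -- rank-nullity chase
    have rn1 := LinearMap.finrank_range_add_finrank_ker β
    have hker : Module.finrank k (LinearMap.ker β)
        = Module.finrank k (quotPiece k r I1 d ⊓ annS I1 I2 : Submodule k (R ⧸ I1)) := by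
      rw [k1]
      exact (Submodule.comapSubtypeEquivOfLe inf_le_left).finrank_eq
    have hrange : Module.finrank k (LinearMap.range β)
        = Module.finrank k (bpiece I1 I2 (e - d)) := by
      have rn2 := LinearMap.finrank_range_add_finrank_ker β.flip
      rw [k2, finrank_bot, add_zero] at rn2
      have hcomp : β.flip = β.dualMap.comp (Module.Dual.eval k (bpiece I1 I2 (e - d))) := by
        apply LinearMap.ext
        intro z
        rfl
      have hsurj : LinearMap.range (Module.Dual.eval k (bpiece I1 I2 (e - d))) = ⊤ :=
        Module.erange_coe k _
      have : LinearMap.range β.flip = LinearMap.range β.dualMap := by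
        rw [hcomp, LinearMap.range_comp, hsurj, Submodule.map_top]
      rw [this] at rn2
      rw [LinearMap.finrank_range_dualMap_eq_finrank_range] at rn2
      exact rn2
    rw [hker, hrange] at rn1
    have : hilb k r I1 d = Module.finrank k (quotPiece k r I1 d) := rfl
    omega
  omega

end Duality

section Assembly

variable {k : Type} [Field k] {r : ℕ}

local notation "R" => MvPolynomial (Fin r) k

lemma w_identity {I I1 I2 : Ideal R} (hmeet : I1 ⊓ I2 = I)
    (h1 : ∀ f ∈ I1, ∀ d, homogeneousComponent d f ∈ I1)
    (h2 : ∀ f ∈ I2, ∀ d, homogeneousComponent d f ∈ I2) (j : ℕ) :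
    Module.finrank k (homogeneousSubmodule (Fin r) k j
        ⊓ (I1 + I2).restrictScalars k : Submodule k R)
      + Module.finrank k (homogeneousSubmodule (Fin r) k j
        ⊓ I.restrictScalars k : Submodule k R)
      = Module.finrank k (homogeneousSubmodule (Fin r) k j
        ⊓ I1.restrictScalars k : Submodule k R)
      + Module.finrank k (homogeneousSubmodule (Fin r) k j
        ⊓ I2.restrictScalars k : Submodule k R) := by
  haveI : Module.Finite k
      (homogeneousSubmodule (Fin r) k j ⊓ I1.restrictScalars k : Submodule k R) :=
    Submodule.finiteDimensional_of_le inf_le_left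
  haveI : Module.Finite k
      (homogeneousSubmodule (Fin r) k j ⊓ I2.restrictScalars k : Submodule k R) :=
    Submodule.finiteDimensional_of_le inf_le_left
  have hsup := Submodule.finrank_sup_add_finrank_inf_eq
    (homogeneousSubmodule (Fin r) k j ⊓ I1.restrictScalars k)
    (homogeneousSubmodule (Fin r) k j ⊓ I2.restrictScalars k)
  have hinf : (homogeneousSubmodule (Fin r) k j ⊓ I1.restrictScalars k)
      ⊓ (homogeneousSubmodule (Fin r) k j ⊓ I2.restrictScalars k)
      = homogeneousSubmodule (Fin r) k j ⊓ I.restrictScalars k := by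
    rw [← hmeet]
    ext f
    constructor
    · rintro ⟨⟨ha, hb⟩, ⟨_, hc⟩⟩
      exact ⟨ha, hb, hc⟩
    · rintro ⟨ha, hb, hc⟩
      exact ⟨⟨ha, hb⟩, ⟨ha, hc⟩⟩
  rw [hinf] at hsup
  rw [inf_sup_piece h1 h2 j]
  omega

end Assembly


/-- Theorem 2.3 (decomposition of the `h`-vector of a level algebra of type 2): if `A = R/I`
is level of type 2 and socle degree `e`, and `I₁, I₂ ⊇ I` give homogeneous ideals `J₁, J₂` of
`A` with `J₁ ∩ J₂ = 0` and with `A/J₁ = R/I₁`, `A/J₂ = R/I₂` Gorenstein of socle degree `e`,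
then `h = h' + h'' + h'''` where `h''` is the Hilbert function of `A/(J₁+J₂)` and
`h' = h(A/J₁) - h''`, `h''' = h(A/J₂) - h''`; moreover `h''` and the reverses of `h'` and
`h'''` are Hilbert functions of graded quotients of `A`. -/
theorem stmt1 (k : Type) [Field k] [CharZero k] (r e : ℕ)
    (I I1 I2 : Ideal (MvPolynomial (Fin r) k))
    (hI : IsLevelQuot k r e 2 I)
    (hle1 : I ≤ I1) (hle2 : I ≤ I2) (hmeet : I1 ⊓ I2 = I)
    (hG1 : IsLevelQuot k r e 1 I1) (hG2 : IsLevelQuot k r e 1 I2)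
    (h'' h' h''' : ℕ → ℤ)
    (hdef'' : ∀ d, h'' d = hilb k r (I1 + I2) d)
    (hdef' : ∀ d, h' d = (hilb k r I1 d : ℤ) - h'' d)
    (hdef''' : ∀ d, h''' d = (hilb k r I2 d : ℤ) - h'' d) :
    (∀ d ≤ e, (hilb k r I d : ℤ) = h' d + h'' d + h''' d) ∧
    (∃ C : Ideal (MvPolynomial (Fin r) k), I ≤ C ∧
        (∀ f ∈ C, ∀ d, homogeneousComponent d f ∈ C) ∧
        (∀ d ≤ e, (hilb k r C d : ℤ) = h'' d) ∧ (∀ d, e < d → hilb k r C d = 0)) ∧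
    (∃ C : Ideal (MvPolynomial (Fin r) k), I ≤ C ∧
        (∀ f ∈ C, ∀ d, homogeneousComponent d f ∈ C) ∧
        (∀ d ≤ e, (hilb k r C d : ℤ) = h' (e - d)) ∧ (∀ d, e < d → hilb k r C d = 0)) ∧
    (∃ C : Ideal (MvPolynomial (Fin r) k), I ≤ C ∧
        (∀ f ∈ C, ∀ d, homogeneousComponent d f ∈ C) ∧
        (∀ d ≤ e, (hilb k r C d : ℤ) = h''' (e - d)) ∧ (∀ d, e < d → hilb k r C d = 0)) := by
  obtain ⟨h1hom, hvan1, hone1, hsoc1⟩ := hG1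
  obtain ⟨h2hom, hvan2, hone2, hsoc2⟩ := hG2
  refine ⟨?_, ?_, ?_, ?_⟩
  · -- part (1)
    intro d _
    rw [hdef' d, hdef''' d, hdef'' d]
    have e1 := hilb_add I d
    have e2 := hilb_add I1 d
    have e3 := hilb_add I2 d
    have e4 := hilb_add (I1 + I2) d
    have e5 := w_identity hmeet h1hom h2hom d
    omega
  · -- C = I1 + I2
    refine ⟨I1 + I2, le_trans hle1 le_sup_left, sum_homog h1hom h2hom, ?_, ?_⟩
    · intro d _
      rw [hdef'' d]
    · intro d hd
      have h0 := hilb_anti (le_sup_left : I1 ≤ I1 + I2) d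
      rw [hvan1 d hd] at h0
      exact Nat.le_zero.mp h0
  · -- C = I1 : I2
    refine ⟨colonI I1 I2, le_trans hle1 (le_colonI_left I1 I2), colonI_homog h1hom h2hom,
      ?_, ?_⟩
    · intro d hd
      rw [duality I1 I2 e h1hom hvan1 hone1 hsoc1 h2hom d hd,
        hdef' (e - d), hdef'' (e - d)]
      have e1 := bfinrank I1 I2 (e - d)
      rw [hmeet] at e1
      have e2 := hilb_add I1 (e - d)
      have e3 := hilb_add (I1 + I2) (e - d)
      have e4 := hilb_add I (e - d)
      have e5 := w_identity hmeet h1hom h2hom (e - d)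
      omega
    · intro d hd
      have := hilb_anti (le_colonI_left I1 I2) d
      rw [hvan1 d hd] at this
      omega
  · -- C = I2 : I1
    refine ⟨colonI I2 I1, le_trans hle2 (le_colonI_left I2 I1), colonI_homog h2hom h1hom,
      ?_, ?_⟩
    · intro d hd
      rw [duality I2 I1 e h2hom hvan2 hone2 hsoc2 h1hom d hd,
        hdef''' (e - d), hdef'' (e - d)]
      have e1 := bfinrank I2 I1 (e - d)
      rw [show I2 ⊓ I1 = I by rw [inf_comm]; exact hmeet] at e1
      have e2 := hilb_add I2 (e - d)
      have e3 := hilb_add (I1 + I2) (e - d)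
      have e4 := hilb_add I (e - d)
      have e5 := w_identity hmeet h1hom h2hom (e - d)
      omega
    · intro d hd
      have := hilb_anti (le_colonI_left I2 I1) d
      rw [hvan2 d hd] at this
      omega
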